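/- Let F be a field of characteristic zero, β ∈ F, and let (y₁,ₙ), (y₂,ₙ) be sequences of nonzero elements of F with y₁,ₙ + β ≠ 0 for all n, satisfying y₁,ₙ₊₁·y₁,ₙ = (y₁,ₙ+β)²·y₂,ₙ + β and y₂,ₙ₊₁·y₂,ₙ·(y₁,ₙ+β)² = y₁,ₙ₊₁ + 1 for all n ≥ 0. Set wₙ = y₁,ₙ + β. Then (wₙ) satisfies the Lyness recurrence w_{n+1}·w_{n-1} = (1−β)·wₙ + (β·K + 2β² + β + 1) for all n ≥ 1, where K = K̃₁(y₁,₀, y₂,₀) is the value of the first integral K̃₁(y₁,y₂) = y₁y₂ + y₁ + (2β+1)y₂ + β(β+2)y₂/y₁ + β²y₂/y₁² + (3β+2)/y₁ + 1/y₂ + 2β/y₁² + 2/(y₁y₂) + 1/(y₁²y₂). -/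

import Mathlib

/-- The first integral `K̃₁` of the deformed B₃ map `φ̂₁` (case `b₁ = b₂ = β`,
`b₃ = 1`). -/
noncomputable def KtilB3₁ {F : Type*} [Field F] (β y₁ y₂ : F) : F :=
  y₁ * y₂ + y₁ + (2 * β + 1) * y₂ + β * (β + 2) * y₂ / y₁ + β ^ 2 * y₂ / y₁ ^ 2 +
    (3 * β + 2) / y₁ + 1 / y₂ + 2 * β / y₁ ^ 2 + 2 / (y₁ * y₂) + 1 / (y₁ ^ 2 * y₂)

private lemma Ktil_mul {F : Type*} [Field F] (β x y : F) (hx : x ≠ 0) (hy : y ≠ 0) :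
    KtilB3₁ β x y * (x ^ 2 * y) =
      y ^ 2 * (x + β) ^ 2 * (x + 1) + y * (x ^ 3 + (3 * β + 2) * x + 2 * β) + (x + 1) ^ 2 := by
  have h : KtilB3₁ β x y =
      (y ^ 2 * (x + β) ^ 2 * (x + 1) + y * (x ^ 3 + (3 * β + 2) * x + 2 * β) + (x + 1) ^ 2) /
        (x ^ 2 * y) := by
    have hD : x * x ^ 2 * x * y ≠ 0 :=
      mul_ne_zero (mul_ne_zero (mul_ne_zero hx (pow_ne_zero 2 hx)) hx) hy
    unfold KtilB3₁
    field_simp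
    ring
  rw [h, div_mul_cancel₀ _ (mul_ne_zero (pow_ne_zero 2 hx) hy)]

private lemma K_invariant {F : Type*} [Field F] (β a b c d : F)
    (ha : a ≠ 0) (hb : b ≠ 0) (hc : c ≠ 0) (hd : d ≠ 0) (hab : a + β ≠ 0)
    (h1 : c * a = (a + β) ^ 2 * b + β) (h2 : d * b * (a + β) ^ 2 = c + 1) :
    KtilB3₁ β c d = KtilB3₁ β a b := by
  have hKc := Ktil_mul β c d hc hd
  have hKa := Ktil_mul β a b ha hb
  have hS : c ^ 2 * d * (a ^ 2 * b) * (a ^ 5 * (b * (a + β) ^ 2) ^ 2) ≠ 0 := by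
    apply mul_ne_zero (mul_ne_zero (mul_ne_zero (pow_ne_zero 2 hc) hd)
      (mul_ne_zero (pow_ne_zero 2 ha) hb))
    exact mul_ne_zero (pow_ne_zero 5 ha) (pow_ne_zero 2 (mul_ne_zero hb (pow_ne_zero 2 hab)))
  apply mul_right_cancel₀ hS
  linear_combination ((-1)*a^5*b*c^2*β^2 + (-2)*a^5*b^2*c^2*β^3 + (-1)*a^5*b^3*c^2*β^4 + (-2)*a^6*b*c^2*β + (-2)*a^6*b*c^2*β^2 + (-6)*a^6*b^2*c^2*β^2 + (-3)*a^6*b^2*c^2*β^3 + (-4)*a^6*b^3*c^2*β^3 + (-1)*a^6*b^3*c^2*β^4 + a^7*b*β^2 + (2)*a^7*b*c*β + (2)*a^7*b*c*β^2 + (2)*a^7*b*c^3 + (2)*a^7*b*c^3*β + a^7*b*c^4 + (2)*a^7*b^2*β^3 + a^7*b^2*d*β^4 + (2)*a^7*b^2*c*β^2 + (3)*a^7*b^2*c*β^3 + (2)*a^7*b^2*c*d*β^3 + a^7*b^2*c*d*β^4 + (-6)*a^7*b^2*c^2*β + (-6)*a^7*b^2*c^2*β^2 + a^7*b^2*c^2*d*β^2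 + (2)*a^7*b^2*c^2*d*β^3 + a^7*b^2*c^3*β^2 + a^7*b^2*c^3*d*β^2 + (-6)*a^7*b^3*c^2*β^2 + (-4)*a^7*b^3*c^2*β^3 + (-2)*a^8*b*c^2 + (-2)*a^8*b*c^2*β + (4)*a^8*b^2*β^2 + (2)*a^8*b^2*d*β^3 + (4)*a^8*b^2*c*β + (6)*a^8*b^2*c*β^2 + (4)*a^8*b^2*c*d*β^2 + (2)*a^8*b^2*c*d*β^3 + (-2)*a^8*b^2*c^2 + (-3)*a^8*b^2*c^2*β + (-1)*a^8*b^2*c^2*β^2 + (2)*a^8*b^2*c^2*d*β + (4)*a^8*b^2*c^2*d*β^2 + (2)*a^8*b^2*c^3*β + (2)*a^8*b^2*c^3*d*β + (-4)*a^8*b^3*c^2*β + (-6)*a^8*b^3*c^2*β^2 + (-1)*a^9*b*c^2 + (2)*a^9*b^2*β + a^9*b^2*d*β^2 + (2)*a^9*b^2*c + (3)*a^9*b^2*c*β + (2)*a^9*b^2*c*d*β + a^9*b^2*c*d*β^2 + (-2)*a^9*b^2*c^2*β + a^9*b^2*c^2*d + (2)*a^9*b^2*c^2*d*β + a^9*b^2*c^3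 + a^9*b^2*c^3*d + (-1)*a^9*b^3*c^2 + (-4)*a^9*b^3*c^2*β + (-1)*a^10*b^2*c^2 + (-1)*a^10*b^3*c^2) * h2 + (a^5*b*c^2*β + a^5*b*c^3*β + a^5*b^2*c^2*β^2 + a^5*b^2*c^3*β^2 + (2)*a^6*b*c^2 + (2)*a^6*b*c^2*β + (3)*a^6*b*c^3 + (2)*a^6*b*c^3*β + a^6*b*c^4 + (2)*a^6*b^2*c^2*β + a^6*b^2*c^2*β^2 + (2)*a^6*b^2*c^3*β + a^6*b^2*c^3*β^2 + (-1)*a^7*b*β + (-2)*a^7*b*c + (-3)*a^7*b*c*β + (-2)*a^7*b*c^2 + (-2)*a^7*b*c^2*β + (-1)*a^7*b^2*β^2 + (-2)*a^7*b^2*c*β^2 + a^7*b^2*c^2 + (2)*a^7*b^2*c^2*β + (-1)*a^7*b^2*c^2*β^2 + a^7*b^2*c^3 + (2)*a^7*b^2*c^3*β + (-1)*a^8*b*c + (-1)*a^8*b*c^2 + (-2)*a^8*b^2*β + (-4)*a^8*b^2*c*β + a^8*b^2*c^2 + (-2)*a^8*b^2*c^2*β + a^8*b^2*c^3 + (-1)*a^9*b^2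 + (-2)*a^9*b^2*c + (-1)*a^9*b^2*c^2) * h1 +
    ((a ^ 5 * (b * (a + β) ^ 2) ^ 2) * (a ^ 2 * b)) * hKc -
    ((a ^ 5 * (b * (a + β) ^ 2) ^ 2) * (c ^ 2 * d)) * hKa

private lemma key_alg {F : Type*} [Field F] (β a b c d e : F)
    (ha : a ≠ 0) (hb : b ≠ 0) (hc : c ≠ 0) (hd : d ≠ 0) (hab : a + β ≠ 0)
    (h1 : c * a = (a + β) ^ 2 * b + β) (h2 : d * b * (a + β) ^ 2 = c + 1)
    (h3 : e * c = (c + β) ^ 2 * d + β) :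
    (e + β) * (a + β) = (1 - β) * (c + β) + (β * KtilB3₁ β a b + 2 * β ^ 2 + β + 1) := by
  have hKa := Ktil_mul β a b ha hb
  have hS : (a ^ 2 * b) * (a ^ 3 * (b * (a + β) ^ 2) * c) ≠ 0 := by
    apply mul_ne_zero (mul_ne_zero (pow_ne_zero 2 ha) hb)
    exact mul_ne_zero (mul_ne_zero (pow_ne_zero 3 ha)
      (mul_ne_zero hb (pow_ne_zero 2 hab))) hc
  apply mul_right_cancel₀ hS
  linear_combination (a^5*b^2*β^3 + (3)*a^6*b^2*β^2 + (3)*a^7*b^2*β + a^8*b^2) * h3 + (a^5*b*β^3 + (2)*a^5*b*c*β^2 + a^5*b*c^2*β + a^6*b*β^2 + (2)*a^6*b*c*β + a^6*b*c^2) * h2 + (a^3*b*c*β^2 + a^3*b^2*c*β^3 + (2)*a^4*b*c*β + (2)*a^4*b*c*β^2 + a^4*b*c^2*β + (2)*a^4*b^2*c*β^2 + a^4*b^2*c*β^3 + (-1)*a^5*b*β^2 + a^5*b*c + (2)*a^5*b*c*β + a^5*b*c^2 + a^5*b^2*c*β + (2)*a^5*b^2*c*β^2 + (-1)*a^6*b*β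 + a^6*b^2*c*β) * h1 -
    (β * (a ^ 3 * (b * (a + β) ^ 2) * c)) * hKa

/-- along orbits of the deformed B₃ map `φ̂₁`, the quantity
`wₙ = y₁,ₙ + β` satisfies the Lyness recurrence
`w_{n+1}w_{n-1} = (1−β)wₙ + (βK + 2β² + β + 1)`, where `K` is the value of the
first integral `K̃₁`. -/
theorem deformed_B3_map1_lyness {F : Type*} [Field F] [CharZero F] (β : F)
    (y₁ y₂ : ℕ → F)
    (h₁ : ∀ n, y₁ n ≠ 0) (h₂ : ∀ n, y₂ n ≠ 0) (hβ : ∀ n, y₁ n + β ≠ 0)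
    (e₁ : ∀ n, y₁ (n + 1) * y₁ n = (y₁ n + β) ^ 2 * y₂ n + β)
    (e₂ : ∀ n, y₂ (n + 1) * y₂ n * (y₁ n + β) ^ 2 = y₁ (n + 1) + 1)
    (w : ℕ → F) (hw : ∀ n, w n = y₁ n + β) :
    ∀ n, w (n + 2) * w n = (1 - β) * w (n + 1) +
      (β * KtilB3₁ β (y₁ 0) (y₂ 0) + 2 * β ^ 2 + β + 1) := by
  have hK : ∀ n, KtilB3₁ β (y₁ n) (y₂ n) = KtilB3₁ β (y₁ 0) (y₂ 0) := by
    intro n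
    induction n with
    | zero => rfl
    | succ k ih =>
      rw [← ih]
      exact K_invariant β (y₁ k) (y₂ k) (y₁ (k + 1)) (y₂ (k + 1)) (h₁ k) (h₂ k)
        (h₁ (k + 1)) (h₂ (k + 1)) (hβ k) (e₁ k) (e₂ k)
  intro n
  rw [hw, hw, hw, ← hK n]
  exact key_alg β (y₁ n) (y₂ n) (y₁ (n + 1)) (y₂ (n + 1)) (y₁ (n + 2)) (h₁ n) (h₂ n)
    (h₁ (n + 1)) (h₂ (n + 1)) (hβ n) (e₁ n) (e₂ n) (e₁ (n + 1))
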